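/- arXiv:2603.26391 — 2 statements merged into one kernel-verified Lean document; each statement's English description precedes it below -/
import Mathlib

section
/- Let a > 0 be a real number with a < 1. For any positive integers m1, m2 with gcd(m1, m2) = 1 and any integer b with b > 2*m2, the sum over all pairs of positive integers (k, l) with m1*k + m2*l = n of a^(2*m1*k + b*l), after dividing by a^(2n), has as n → ∞ along multiples of m1 a well-defined limit; averaged over residues e = 0,...,m1-1 of n mod m1, the mean value equals (1/m1) * a^(b - 2*m2) / (1 - a^(b - 2*m2)) up to the stated normalization. -/
/-- `h : ℕ → ℝ` has mean value `v` at infinity if, for some modulus `e > 0`, the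
limit of `h` along each arithmetic progression `n ≡ c mod e` exists, and `v` is the
average of these limits. -/
def HasMeanValueAtInfinity (h : ℕ → ℝ) (v : ℝ) : Prop :=
  ∃ e : ℕ, 0 < e ∧ ∃ d : ℕ → ℝ,
    (∀ c < e, Filter.Tendsto (fun k : ℕ => h (k * e + c)) Filter.atTop (nhds (d c))) ∧
    v = (1 / (e : ℝ)) * ∑ c ∈ Finset.range e, d c

/-- For `0 < a < 1`, coprime positive integers `m1, m2` and an integer `b > 2*m2`,
the function `n ↦ (∑_{(k,l) ∈ ℤ_{>0}², m1 k + m2 l = n} a^(2 m1 k + b l)) / a^(2n)`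
has mean value at infinity `(1/m1) * a^(b - 2 m2) / (1 - a^(b - 2 m2))`. -/
theorem stmt_6 (a : ℝ) (ha0 : 0 < a) (ha1 : a < 1)
    (m1 m2 : ℕ) (hm1 : 0 < m1) (hm2 : 0 < m2) (hcop : Nat.Coprime m1 m2)
    (b : ℤ) (hb : 2 * (m2 : ℤ) < b) :
    HasMeanValueAtInfinity
      (fun n : ℕ =>
        (∑ p ∈ (Finset.Icc 1 n ×ˢ Finset.Icc 1 n).filter
            (fun p : ℕ × ℕ => m1 * p.1 + m2 * p.2 = n),
          a ^ ((2 * m1 * p.1 : ℤ) + b * (p.2 : ℤ))) / a ^ (2 * n))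
      ((1 / (m1 : ℝ)) * (a ^ (b - 2 * (m2 : ℤ)) / (1 - a ^ (b - 2 * (m2 : ℤ))))) := by
  classical
  have hane : a ≠ 0 := ha0.ne'
  haveI : NeZero m1 := ⟨hm1.ne'⟩
  set q : ℝ := a ^ (b - 2 * (m2 : ℤ)) with hqdef
  have hq0 : 0 < q := zpow_pos ha0 _
  have hq1 : q < 1 := by
    have hb' : (0:ℤ) < b - 2*m2 := by omega
    have : q = a ^ ((b - 2*(m2:ℤ)).toNat) := by
      rw [hqdef, ← zpow_natCast, Int.toNat_of_nonneg hb'.le]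
    rw [this]
    exact pow_lt_one₀ ha0.le ha1 (by omega)
  have hqm1 : q ^ m1 < 1 := pow_lt_one₀ hq0.le hq1 hm1.ne'
  have hqm0 : 0 < q ^ m1 := pow_pos hq0 _
  have hinv : (m2 : ZMod m1) * (m2 : ZMod m1)⁻¹ = 1 :=
    ZMod.coe_mul_inv_eq_one m2 hcop.symm
  -- the representative `l0 c ∈ [1, m1]` of `m2⁻¹ c mod m1`
  set v : ℕ → ℕ := fun c => (((c : ZMod m1)) * (m2 : ZMod m1)⁻¹).val with hvdef
  set l0 : ℕ → ℕ := fun c => if v c = 0 then m1 else v c with hl0def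
  have hl0_pos : ∀ c, 1 ≤ l0 c := by
    intro c; by_cases h : v c = 0 <;> simp [hl0def, h] <;> omega
  have hl0_le : ∀ c, l0 c ≤ m1 := by
    intro c; by_cases h : v c = 0
    · simp [hl0def, h]
    · simp only [hl0def, h, if_false]
      exact (ZMod.val_lt _).le
  have hl0_cast : ∀ c, ((l0 c : ℕ) : ZMod m1) = (c : ZMod m1) * (m2 : ZMod m1)⁻¹ := by
    intro c
    by_cases h : v c = 0
    · have h0 : ((c : ZMod m1)) * (m2 : ZMod m1)⁻¹ = 0 := (ZMod.val_eq_zero _).mp h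
      simp [hl0def, h, h0, ZMod.natCast_self]
    · simp only [hl0def, h, if_false, hvdef]
      rw [if_neg (show ¬ ((c : ZMod m1) * (m2 : ZMod m1)⁻¹).val = 0 from h), ZMod.natCast_val, ZMod.cast_id]
  have hl0_cong : ∀ c, ((m2 * l0 c : ℕ) : ZMod m1) = (c : ZMod m1) := by
    intro c
    push_cast
    rw [hl0_cast c]
    calc (m2 : ZMod m1) * ((c : ZMod m1) * (m2 : ZMod m1)⁻¹)
        = (c : ZMod m1) * ((m2 : ZMod m1) * (m2 : ZMod m1)⁻¹) := by ring
      _ = c := by rw [hinv, mul_one]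
  -- uniqueness of representatives in [1, m1]
  have huniq : ∀ x y : ℕ, 1 ≤ x → x ≤ m1 → 1 ≤ y → y ≤ m1 →
      (x : ZMod m1) = (y : ZMod m1) → x = y := by
    intro x y hx1 hxm hy1 hym hxy
    have hmod : x ≡ y [MOD m1] := (ZMod.natCast_eq_natCast_iff _ _ _).mp hxy
    rcases le_total x y with h | h
    · have hd : m1 ∣ y - x := (Nat.modEq_iff_dvd' h).mp hmod
      rcases hd with ⟨t, ht⟩
      rcases Nat.eq_zero_or_pos t with ht0 | ht0
      · rw [ht0, Nat.mul_zero] at ht; omega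
      · have hmt : m1 ≤ m1 * t := Nat.le_mul_of_pos_right m1 ht0
        omega
    · have hd : m1 ∣ x - y := (Nat.modEq_iff_dvd' h).mp hmod.symm
      rcases hd with ⟨t, ht⟩
      rcases Nat.eq_zero_or_pos t with ht0 | ht0
      · rw [ht0, Nat.mul_zero] at ht; omega
      · have hmt : m1 ≤ m1 * t := Nat.le_mul_of_pos_right m1 ht0
        omega
  -- if x ∈ [1,m1] and x ≡ y mod m1 with y ≥ 1, then x ≤ y and m1 ∣ y - x
  have hge : ∀ x y : ℕ, 1 ≤ x → x ≤ m1 → 1 ≤ y →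
      (x : ZMod m1) = (y : ZMod m1) → x ≤ y ∧ m1 ∣ y - x := by
    intro x y hx1 hxm hy1 hxy
    have hmod : x ≡ y [MOD m1] := (ZMod.natCast_eq_natCast_iff _ _ _).mp hxy
    rcases le_total x y with h | h
    · exact ⟨h, (Nat.modEq_iff_dvd' h).mp hmod⟩
    · have hd : m1 ∣ x - y := (Nat.modEq_iff_dvd' h).mp hmod.symm
      rcases Nat.eq_zero_or_pos (x - y) with h0 | h0
      · have hxy' : x = y := by omega
        exact ⟨le_of_eq hxy', hxy' ▸ (by simp)⟩
      · have := Nat.le_of_dvd h0 hd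
        omega
  -- the count of valid l's
  set N : ℕ → ℕ → ℕ := fun c n =>
    if m1 + m2 * l0 c ≤ n then (n - (m1 + m2 * l0 c)) / (m1 * m2) + 1 else 0 with hNdef
  have hD : 0 < m1 * m2 := Nat.mul_pos hm1 hm2
  have hNmem : ∀ c n j, j < N c n ↔ m1 + m2 * l0 c + m2 * m1 * j ≤ n := by
    intro c n j
    by_cases h : m1 + m2 * l0 c ≤ n
    · simp only [hNdef, h, if_true]
      have e1 : j * (m1 * m2) = m2 * m1 * j := by ring
      constructor
      · intro hj
        have hj' : j ≤ (n - (m1 + m2 * l0 c)) / (m1 * m2) := by omega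
        have := (Nat.le_div_iff_mul_le hD).mp hj'
        omega
      · intro hj
        have : j ≤ (n - (m1 + m2 * l0 c)) / (m1 * m2) :=
          (Nat.le_div_iff_mul_le hD).mpr (by omega)
        omega
    · simp only [hNdef, h, if_false]
      omega
  -- key: the normalized sum along n ≡ c (mod m1)
  have key : ∀ c n, n % m1 = c →
      (∑ p ∈ (Finset.Icc 1 n ×ˢ Finset.Icc 1 n).filter
          (fun p : ℕ × ℕ => m1 * p.1 + m2 * p.2 = n),
        a ^ ((2 * m1 * p.1 : ℤ) + b * (p.2 : ℤ))) / a ^ (2 * n)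
      = ∑ j ∈ Finset.range (N c n), q ^ (l0 c) * (q ^ m1) ^ j := by
    intro c n hnc
    have hnZ : ((n : ℕ) : ZMod m1) = (c : ZMod m1) := by
      rw [ZMod.natCast_eq_natCast_iff]
      exact (Nat.mod_modEq n m1).symm.trans (by rw [hnc])
    rw [Finset.sum_div]
    refine Finset.sum_nbij' (fun p => (p.2 - l0 c) / m1)
      (fun j => ((n - m2 * (l0 c + j * m1)) / m1, l0 c + j * m1)) ?_ ?_ ?_ ?_ ?_
    · -- forward membership
      rintro ⟨k, l⟩ hp
      simp only [Finset.mem_filter, Finset.mem_product, Finset.mem_Icc] at hp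
      obtain ⟨⟨⟨hk1, hkn⟩, hl1, hln⟩, he⟩ := hp
      -- l ≡ l0 c mod m1
      have hlZ : ((l0 c : ℕ) : ZMod m1) = (l : ZMod m1) := by
        have hcast : ((m1 * k + m2 * l : ℕ) : ZMod m1) = (c : ZMod m1) := by
          rw [he]; exact hnZ
        push_cast [ZMod.natCast_self] at hcast
        rw [zero_mul, zero_add] at hcast
        rw [hl0_cast c, ← hcast]
        calc ((m2 : ZMod m1) * l) * (m2 : ZMod m1)⁻¹
            = (l : ZMod m1) * ((m2 : ZMod m1) * (m2 : ZMod m1)⁻¹) := by ring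
          _ = l := by rw [hinv, mul_one]
      obtain ⟨hle, hdvd⟩ := hge (l0 c) l (hl0_pos c) (hl0_le c) hl1 hlZ
      simp only [Finset.mem_range]
      rw [hNmem]
      have hj : (l - l0 c) / m1 * m1 = l - l0 c := Nat.div_mul_cancel hdvd
      have : m2 * m1 * ((l - l0 c) / m1) = m2 * ((l - l0 c) / m1 * m1) := by ring
      rw [this, hj]
      have hm1k : m1 ≤ m1 * k := Nat.le_mul_of_pos_right m1 hk1
      have hms : m2 * (l - l0 c) = m2 * l - m2 * l0 c := Nat.mul_sub m2 l (l0 c)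
      have hml0 : m2 * l0 c ≤ m2 * l := Nat.mul_le_mul_left m2 hle
      omega
    · -- backward membership
      intro j hj
      simp only [Finset.mem_range] at hj
      rw [hNmem] at hj
      obtain ⟨l, hle2⟩ : ∃ l, l0 c + j * m1 = l := ⟨_, rfl⟩
      have hml2 : m2 * l = m2 * l0 c + m2 * m1 * j := by rw [← hle2]; ring
      have hml : m2 * l ≤ n := by omega
      have hlZ : ((m2 * l : ℕ) : ZMod m1) = (n : ZMod m1) := by
        rw [hnZ, ← hl0_cong c, ← hle2]
        push_cast [ZMod.natCast_self]
        ring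
      have hmod : m2 * l ≡ n [MOD m1] := (ZMod.natCast_eq_natCast_iff _ _ _).mp hlZ
      have hdvd : m1 ∣ n - m2 * l := (Nat.modEq_iff_dvd' hml).mp hmod
      obtain ⟨K, hKe⟩ : ∃ K, (n - m2 * l) / m1 = K := ⟨_, rfl⟩
      have hkeq : m1 * K = n - m2 * l := by rw [← hKe]; exact Nat.mul_div_cancel' hdvd
      have hl1 : 1 ≤ l := by have := hl0_pos c; omega
      have h1K : 1 ≤ K := by
        rcases Nat.eq_zero_or_pos K with h0 | h0
        · rw [h0, Nat.mul_zero] at hkeq; omega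
        · exact h0
      have hKm : K ≤ m1 * K := Nat.le_mul_of_pos_left K hm1
      have hlm : l ≤ m2 * l := Nat.le_mul_of_pos_left l hm2
      simp only [Finset.mem_filter, Finset.mem_product, Finset.mem_Icc, hle2, hKe]
      exact ⟨⟨⟨h1K, by omega⟩, hl1, by omega⟩, by omega⟩
    · -- left inverse
      rintro ⟨k, l⟩ hp
      simp only [Finset.mem_filter, Finset.mem_product, Finset.mem_Icc] at hp
      obtain ⟨⟨⟨hk1, hkn⟩, hl1, hln⟩, he⟩ := hp
      have hlZ : ((l0 c : ℕ) : ZMod m1) = (l : ZMod m1) := by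
        have hcast : ((m1 * k + m2 * l : ℕ) : ZMod m1) = (c : ZMod m1) := by
          rw [he]; exact hnZ
        push_cast [ZMod.natCast_self] at hcast
        rw [zero_mul, zero_add] at hcast
        rw [hl0_cast c, ← hcast]
        calc ((m2 : ZMod m1) * l) * (m2 : ZMod m1)⁻¹
            = (l : ZMod m1) * ((m2 : ZMod m1) * (m2 : ZMod m1)⁻¹) := by ring
          _ = l := by rw [hinv, mul_one]
      obtain ⟨hle, hdvd⟩ := hge (l0 c) l (hl0_pos c) (hl0_le c) hl1 hlZ
      have hj : (l - l0 c) / m1 * m1 = l - l0 c := Nat.div_mul_cancel hdvd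
      have hl2 : l0 c + (l - l0 c) / m1 * m1 = l := by omega
      have hk2 : (n - m2 * l) / m1 = k := by
        have : n - m2 * l = m1 * k := by omega
        rw [this, Nat.mul_div_cancel_left _ hm1]
      simp only [Prod.mk.injEq]
      rw [hl2]
      exact ⟨hk2, rfl⟩
    · -- right inverse
      intro j hj
      show (l0 c + j * m1 - l0 c) / m1 = j
      have h1 : l0 c + j * m1 - l0 c = j * m1 := by omega
      rw [h1, Nat.mul_div_cancel _ hm1]
    · -- values agree
      rintro ⟨k, l⟩ hp
      simp only [Finset.mem_filter, Finset.mem_product, Finset.mem_Icc] at hp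
      obtain ⟨⟨⟨hk1, hkn⟩, hl1, hln⟩, he⟩ := hp
      have hlZ : ((l0 c : ℕ) : ZMod m1) = (l : ZMod m1) := by
        have hcast : ((m1 * k + m2 * l : ℕ) : ZMod m1) = (c : ZMod m1) := by
          rw [he]; exact hnZ
        push_cast [ZMod.natCast_self] at hcast
        rw [zero_mul, zero_add] at hcast
        rw [hl0_cast c, ← hcast]
        calc ((m2 : ZMod m1) * l) * (m2 : ZMod m1)⁻¹
            = (l : ZMod m1) * ((m2 : ZMod m1) * (m2 : ZMod m1)⁻¹) := by ring
          _ = l := by rw [hinv, mul_one]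
      obtain ⟨hle, hdvd⟩ := hge (l0 c) l (hl0_pos c) (hl0_le c) hl1 hlZ
      have hj : (l - l0 c) / m1 * m1 = l - l0 c := Nat.div_mul_cancel hdvd
      -- q^(l0 c) * (q^m1)^j = q^l
      have hql : q ^ (l0 c) * (q ^ m1) ^ ((l - l0 c) / m1) = q ^ l := by
        have h3 : l0 c + m1 * ((l - l0 c) / m1) = l := by
          rw [Nat.mul_div_cancel' hdvd]; omega
        rw [← pow_mul, ← pow_add, h3]
      rw [hql]
      -- exponent arithmetic
      have heZ : (m1 : ℤ) * k + m2 * l = n := by exact_mod_cast congrArg (Nat.cast : ℕ → ℤ) he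
      have hexp : (2 * m1 * k : ℤ) + b * l = 2 * n + (b - 2 * m2) * l := by
        linear_combination 2 * heZ
      have e1 : a ^ ((2:ℤ) * (n:ℤ)) = a ^ (2 * n : ℕ) := by
        rw [show ((2:ℤ) * (n:ℤ)) = ((2 * n : ℕ) : ℤ) by push_cast; ring, zpow_natCast]
      have e2 : a ^ ((b - 2*(m2:ℤ)) * (l:ℤ)) = q ^ l := by
        rw [zpow_mul, hqdef]
        exact zpow_natCast _ l
      have hterm : a ^ ((2 * m1 * k : ℤ) + b * (l:ℤ)) = a ^ (2*n) * q ^ l := by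
        rw [hexp, zpow_add₀ hane, e1, e2]
      rw [hterm, mul_comm, mul_div_assoc, div_self (pow_ne_zero _ hane), mul_one]
  -- the limits
  refine ⟨m1, hm1, fun c => q ^ (l0 c) * (1 - q ^ m1)⁻¹, fun c hc => ?_, ?_⟩
  · -- tendsto along the progression
    have hmodc : ∀ k : ℕ, (k * m1 + c) % m1 = c := by
      intro k
      rw [mul_comm, Nat.mul_add_mod, Nat.mod_eq_of_lt hc]
    have heq : ∀ k : ℕ,
        (∑ p ∈ (Finset.Icc 1 (k*m1+c) ×ˢ Finset.Icc 1 (k*m1+c)).filter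
            (fun p : ℕ × ℕ => m1 * p.1 + m2 * p.2 = k*m1+c),
          a ^ ((2 * m1 * p.1 : ℤ) + b * (p.2 : ℤ))) / a ^ (2 * (k*m1+c))
        = ∑ j ∈ Finset.range (N c (k*m1+c)), q ^ (l0 c) * (q ^ m1) ^ j :=
      fun k => key c (k*m1+c) (hmodc k)
    simp only [heq]
    have hsum : HasSum (fun j : ℕ => q ^ (l0 c) * (q ^ m1) ^ j)
        (q ^ (l0 c) * (1 - q ^ m1)⁻¹) :=
      (hasSum_geometric_of_lt_one hqm0.le hqm1).mul_left _
    have htends := hsum.tendsto_sum_nat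
    have hNtop : Filter.Tendsto (fun k => N c (k * m1 + c)) Filter.atTop Filter.atTop := by
      rw [Filter.tendsto_atTop_atTop]
      intro M
      refine ⟨M * (m1 * m2) + m1 + m2 * m1, fun k hk => ?_⟩
      have hkm : k ≤ k * m1 := Nat.le_mul_of_pos_right _ hm1
      set n := k * m1 + c with hn
      have hA : m2 * l0 c ≤ m2 * m1 := Nat.mul_le_mul_left _ (hl0_le c)
      have hle : m1 + m2 * l0 c ≤ n := by omega
      have : N c n = (n - (m1 + m2 * l0 c)) / (m1 * m2) + 1 := by
        simp [hNdef, hle]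
      rw [this]
      have : M ≤ (n - (m1 + m2 * l0 c)) / (m1 * m2) :=
        (Nat.le_div_iff_mul_le hD).mpr (by omega)
      omega
    exact htends.comp hNtop
  · -- the average
    have hsum_eq : ∑ c ∈ Finset.range m1, q ^ (l0 c) = ∑ l ∈ Finset.Icc 1 m1, q ^ l := by
      refine Finset.sum_nbij' l0 (fun l => (m2 * l) % m1) ?_ ?_ ?_ ?_ ?_
      · intro c _
        exact Finset.mem_Icc.mpr ⟨hl0_pos c, hl0_le c⟩
      · intro l _
        exact Finset.mem_range.mpr (Nat.mod_lt _ hm1)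
      · intro c hc
        simp only [Finset.mem_range] at hc
        have h1 : ((m2 * l0 c : ℕ) : ZMod m1) = (c : ZMod m1) := hl0_cong c
        have hmod : m2 * l0 c ≡ c [MOD m1] := (ZMod.natCast_eq_natCast_iff _ _ _).mp h1
        have h2 : (m2 * l0 c) % m1 = c % m1 := hmod
        show m2 * l0 c % m1 = c
        rw [h2, Nat.mod_eq_of_lt hc]
      · intro l hl
        simp only [Finset.mem_Icc] at hl
        refine huniq _ _ (hl0_pos _) (hl0_le _) hl.1 hl.2 ?_
        rw [hl0_cast]
        have h1 : (((m2 * l) % m1 : ℕ) : ZMod m1) = ((m2 * l : ℕ) : ZMod m1) :=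
          (ZMod.natCast_eq_natCast_iff _ _ _).mpr (Nat.mod_modEq _ _)
        rw [h1]
        push_cast
        calc ((m2 : ZMod m1) * l) * (m2 : ZMod m1)⁻¹
            = (l : ZMod m1) * ((m2 : ZMod m1) * (m2 : ZMod m1)⁻¹) := by ring
          _ = l := by rw [hinv, mul_one]
      · intro c _
        rfl
    have hIcc : ∑ l ∈ Finset.Icc 1 m1, q ^ l = q * ∑ i ∈ Finset.range m1, q ^ i := by
      rw [← Finset.Ico_add_one_right_eq_Icc, Finset.sum_Ico_eq_sum_range, Finset.mul_sum]
      have h11 : m1 + 1 - 1 = m1 := by omega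
      rw [h11]
      exact Finset.sum_congr rfl (fun i _ => by rw [pow_add, pow_one])
    have h1q : (1 : ℝ) - q ≠ 0 := by linarith
    have h1qm : (1 : ℝ) - q ^ m1 ≠ 0 := by linarith
    have hq1' : q - 1 ≠ 0 := by intro h; apply h1q; linarith
    have hm1R : (m1 : ℝ) ≠ 0 := Nat.cast_ne_zero.mpr hm1.ne'
    rw [← Finset.sum_mul, hsum_eq, hIcc, geom_sum_eq hq1.ne]
    field_simp
    ring
end

section
/- Let h : ℕ → ℝ be a function and suppose e > 0 and e' > 0 are integers such that all limits of h along arithmetic progressions mod e exist and all limits along arithmetic progressions mod e' exist. Then (1/e) * Σ_{c=0}^{e-1} lim_{n→∞, n ≡ c mod e} h(n) = (1/e') * Σ_{c=0}^{e'-1} lim_{n→∞, n ≡ c mod e'} h(n). -/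
open Filter

/-- If `h` has limit `d c` along progressions mod `e`, then along the progression
`c` mod `e*m` the limit is `d (c % e)`. -/
lemma aux_refine (h : ℕ → ℝ) (e : ℕ) (he : 0 < e) (d : ℕ → ℝ)
    (hd : ∀ c < e, Tendsto (fun k : ℕ => h (k * e + c)) atTop (nhds (d c)))
    (m : ℕ) (hm : 0 < m) (c : ℕ) :
    Tendsto (fun k : ℕ => h (k * (e * m) + c)) atTop (nhds (d (c % e))) := by
  have key : ∀ k : ℕ, k * (e * m) + c = (k * m + c / e) * e + c % e := by
    intro k
    have := Nat.div_add_mod c e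
    calc k * (e * m) + c = k * m * e + (e * (c / e) + c % e) := by rw [this]; ring
      _ = (k * m + c / e) * e + c % e := by ring
  have h1 : Tendsto (fun k : ℕ => k * m + c / e) atTop atTop := by
    apply tendsto_atTop_mono (fun k => ?_) tendsto_id
    calc (id k : ℕ) = k * 1 := (mul_one k).symm
      _ ≤ k * m := Nat.mul_le_mul_left k hm
      _ ≤ k * m + c / e := Nat.le_add_right _ _
  have := (hd (c % e) (Nat.mod_lt c he)).comp h1
  simpa only [Function.comp_def, key] using this

lemma aux_sum (f : ℕ → ℝ) (e m : ℕ) :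
    ∑ c ∈ Finset.range (m * e), f (c % e) = m * ∑ r ∈ Finset.range e, f r := by
  induction m with
  | zero => simp
  | succ n ih =>
    have : (n + 1) * e = n * e + e := by ring
    rw [this, Finset.sum_range_add, ih]
    have : ∀ i ∈ Finset.range e, f ((n * e + i) % e) = f i := by
      intro i hi
      have hi2 := Finset.mem_range.mp hi
      rw [Nat.add_mod, Nat.mul_mod_left, Nat.mod_eq_of_lt hi2, zero_add, Nat.mod_eq_of_lt hi2]
    rw [Finset.sum_congr rfl this]
    push_cast; ring

/-- The mean value at infinity is independent of the modulus: if `h : ℕ → ℝ` admits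
limits along all arithmetic progressions mod `e` and mod `e'`, then the averages
of these limits agree. -/
theorem stmt_7 (h : ℕ → ℝ) (e e' : ℕ) (he : 0 < e) (he' : 0 < e')
    (d d' : ℕ → ℝ)
    (hd : ∀ c < e, Filter.Tendsto (fun k : ℕ => h (k * e + c)) Filter.atTop (nhds (d c)))
    (hd' : ∀ c < e', Filter.Tendsto (fun k : ℕ => h (k * e' + c)) Filter.atTop (nhds (d' c))) :
    (1 / (e : ℝ)) * ∑ c ∈ Finset.range e, d c =
      (1 / (e' : ℝ)) * ∑ c ∈ Finset.range e', d' c := by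
  have hEq : ∀ c : ℕ, d (c % e) = d' (c % e') := by
    intro c
    have h1 := aux_refine h e he d hd e' he' c
    have h2 := aux_refine h e' he' d' hd' e he c
    rw [mul_comm e' e] at h2
    exact tendsto_nhds_unique h1 h2
  have hs : ∑ c ∈ Finset.range (e' * e), d (c % e)
      = ∑ c ∈ Finset.range (e * e'), d' (c % e') := by
    rw [mul_comm e' e]
    exact Finset.sum_congr rfl fun c _ => hEq c
  rw [aux_sum d e e', aux_sum d' e' e] at hs
  have he0 : (e : ℝ) ≠ 0 := Nat.cast_ne_zero.mpr he.ne'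
  have he'0 : (e' : ℝ) ≠ 0 := Nat.cast_ne_zero.mpr he'.ne'
  field_simp
  linarith [hs]
end
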